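/- (Strong duality for discrete AOT) min over γ ∈ Γ_≤(μ,ν) of Σ_{i,j} c(i,j)γ(i,j) equals max over potentials φ : X → ℝ, ψ : Z → ℝ with φ(i) + ψ(j) ≤ c(i,j) for all (i,j), φ ≤ 0, and ψ ≤ 0, of Σ_i φ(i)μ(i) + Σ_j ψ(j)ν(j). -/

import Mathlib

open Finset Filter
open scoped RealInnerProductSpace InnerProductSpace

def Feasible {n m : ℕ} (μ : Fin n → ℝ) (ν : Fin m → ℝ) (γ : Fin n → Fin m → ℝ) : Prop :=
  (∀ i j, 0 ≤ γ i j) ∧ (∀ i, ∑ j, γ i j ≤ μ i) ∧ (∀ j, ∑ i, γ i j ≤ ν j)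

def cost {n m : ℕ} (c : Fin n → Fin m → ℝ) (γ : Fin n → Fin m → ℝ) : ℝ :=
  ∑ i, ∑ j, c i j * γ i j

def Optimal {n m : ℕ} (c : Fin n → Fin m → ℝ) (μ : Fin n → ℝ) (ν : Fin m → ℝ)
    (γ : Fin n → Fin m → ℝ) : Prop :=
  Feasible μ ν γ ∧ ∀ γ2, Feasible μ ν γ2 → cost c γ ≤ cost c γ2

lemma cost_continuous {n m : ℕ} (c : Fin n → Fin m → ℝ) :
    Continuous (fun γ : Fin n → Fin m → ℝ => cost c γ) := by
  unfold cost
  exact continuous_finset_sum _ fun i _ => continuous_finset_sum _ fun j _ =>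
    continuous_const.mul ((continuous_apply j).comp (continuous_apply i))

lemma primal_exists {n m : ℕ} (c : Fin n → Fin m → ℝ) (μ : Fin n → ℝ) (ν : Fin m → ℝ)
    (hμ : ∀ i, 0 ≤ μ i) (hν : ∀ j, 0 ≤ ν j) :
    ∃ γ0, Feasible μ ν γ0 ∧ ∀ γ, Feasible μ ν γ → cost c γ0 ≤ cost c γ := by
  set S : Set (Fin n → Fin m → ℝ) := {γ | Feasible μ ν γ} with hS
  have hSne : S.Nonempty := ⟨fun _ _ => 0, fun i j => le_refl 0,
    fun i => by simpa using hμ i, fun j => by simpa using hν j⟩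
  have hclosed : IsClosed S := by
    have : S = (⋂ i, ⋂ j, {γ : Fin n → Fin m → ℝ | 0 ≤ γ i j}) ∩
        ((⋂ i, {γ : Fin n → Fin m → ℝ | ∑ j, γ i j ≤ μ i}) ∩
         (⋂ j, {γ : Fin n → Fin m → ℝ | ∑ i, γ i j ≤ ν j})) := by
      ext γ
      simp [hS, Feasible, Set.mem_iInter, forall_and]
    rw [this]
    refine IsClosed.inter (isClosed_iInter fun i => isClosed_iInter fun j =>
      isClosed_le continuous_const ((continuous_apply j).comp (continuous_apply i)))
      (IsClosed.inter ?_ ?_)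
    · exact isClosed_iInter fun i => isClosed_le
        (continuous_finset_sum _ fun j _ => (continuous_apply j).comp (continuous_apply i))
        continuous_const
    · exact isClosed_iInter fun j => isClosed_le
        (continuous_finset_sum _ fun i _ => (continuous_apply j).comp (continuous_apply i))
        continuous_const
  have hsub : S ⊆ Set.Icc (fun _ _ => 0) (fun i _ => μ i) := by
    rintro γ ⟨h0, h1, _⟩
    constructor
    · intro i; intro j; exact h0 i j
    · intro i; intro j
      calc γ i j ≤ ∑ j', γ i j' := Finset.single_le_sum (fun j' _ => h0 i j') (mem_univ j)
        _ ≤ μ i := h1 i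
  have hcomp : IsCompact S := IsCompact.of_isClosed_subset isCompact_Icc hclosed hsub
  obtain ⟨γ0, hγ0S, hmin⟩ := hcomp.exists_isMinOn hSne (cost_continuous c).continuousOn
  exact ⟨γ0, hγ0S, fun γ hγ => hmin hγ⟩

variable {n m : ℕ}

def DualFeasible (c : Fin n → Fin m → ℝ) (φ : Fin n → ℝ) (ψ : Fin m → ℝ) : Prop :=
  (∀ i j, φ i + ψ j ≤ c i j) ∧ (∀ i, φ i ≤ 0) ∧ (∀ j, ψ j ≤ 0)

def dval (μ : Fin n → ℝ) (ν : Fin m → ℝ) (φ : Fin n → ℝ) (ψ : Fin m → ℝ) : ℝ :=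
  ∑ i, φ i * μ i + ∑ j, ψ j * ν j

lemma abs_c_le (c : Fin n → Fin m → ℝ) (i : Fin n) (j : Fin m) :
    |c i j| ≤ 1 + ∑ i', ∑ j', |c i' j'| := by
  have h1 : |c i j| ≤ ∑ j', |c i j'| :=
    Finset.single_le_sum (f := fun j' => |c i j'|) (fun j' _ => abs_nonneg _) (mem_univ j)
  have h2 : ∑ j', |c i j'| ≤ ∑ i', ∑ j', |c i' j'| :=
    Finset.single_le_sum (f := fun i' => ∑ j', |c i' j'|)
      (fun i' _ => Finset.sum_nonneg fun j' _ => abs_nonneg _) (mem_univ i)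
  linarith

lemma dual_exists (c : Fin n → Fin m → ℝ) (μ : Fin n → ℝ) (ν : Fin m → ℝ)
    (hμ : ∀ i, 0 ≤ μ i) (hν : ∀ j, 0 ≤ ν j) :
    ∃ φ0 ψ0, DualFeasible c φ0 ψ0 ∧
      ∀ φ ψ, DualFeasible c φ ψ → dval μ ν φ ψ ≤ dval μ ν φ0 ψ0 := by
  set M : ℝ := 1 + ∑ i', ∑ j', |c i' j'| with hM
  have hM0 : 0 ≤ M := by
    have : (0:ℝ) ≤ ∑ i', ∑ j', |c i' j'| :=
      Finset.sum_nonneg fun _ _ => Finset.sum_nonneg fun _ _ => abs_nonneg _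
    linarith
  have hMc : ∀ i j, -M ≤ c i j := fun i j => by
    have h1 := abs_c_le c i j
    have h2 := neg_abs_le (c i j)
    rw [hM]; linarith
  -- clamping
  have clamp : ∀ φ ψ, DualFeasible c φ ψ →
      ∃ φ' ψ', DualFeasible c φ' ψ' ∧ (∀ i, -M ≤ φ' i) ∧ (∀ j, -M ≤ ψ' j) ∧
        dval μ ν φ ψ ≤ dval μ ν φ' ψ' := by
    rintro φ ψ ⟨hc, hφ, hψ⟩
    refine ⟨fun i => max (φ i) (-M), fun j => max (ψ j) (-M), ⟨?_, ?_, ?_⟩, ?_, ?_, ?_⟩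
    · intro i j
      dsimp only
      rcases le_or_gt (-M) (φ i) with h1 | h1
      · rcases le_or_gt (-M) (ψ j) with h2 | h2
        · rw [max_eq_left h1, max_eq_left h2]; exact hc i j
        · rw [max_eq_right h2.le]
          have h3 : max (φ i) (-M) ≤ 0 := max_le (hφ i) (by linarith)
          linarith [hMc i j]
      · rw [max_eq_right h1.le]
        have h3 : max (ψ j) (-M) ≤ 0 := max_le (hψ j) (by linarith)
        linarith [hMc i j]
    · intro i; dsimp only; exact max_le (hφ i) (by linarith)
    · intro j; dsimp only; exact max_le (hψ j) (by linarith)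
    · intro i; dsimp only; exact le_max_right _ _
    · intro j; dsimp only; exact le_max_right _ _
    · unfold dval
      refine add_le_add (Finset.sum_le_sum fun i _ => ?_) (Finset.sum_le_sum fun j _ => ?_)
      · exact mul_le_mul_of_nonneg_right (le_max_left _ _) (hμ i)
      · exact mul_le_mul_of_nonneg_right (le_max_left _ _) (hν j)
  -- compact restricted set
  set D : Set ((Fin n → ℝ) × (Fin m → ℝ)) :=
    {p | DualFeasible c p.1 p.2 ∧ (∀ i, -M ≤ p.1 i) ∧ (∀ j, -M ≤ p.2 j)} with hD
  have hDne : D.Nonempty := by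
    refine ⟨(fun _ => -M, fun _ => -M), ⟨fun i j => ?_, fun i => ?_, fun j => ?_⟩,
      fun i => le_refl _, fun j => le_refl _⟩
    · show -M + -M ≤ c i j
      linarith [hMc i j]
    · show -M ≤ (0:ℝ); linarith
    · show -M ≤ (0:ℝ); linarith
  have hDsub : D ⊆ (Set.Icc (fun _ => -M) (fun _ => 0)) ×ˢ (Set.Icc (fun _ => -M) (fun _ => 0)) := by
    rintro ⟨φ, ψ⟩ ⟨⟨_, hφ, hψ⟩, h1, h2⟩
    exact ⟨⟨fun i => h1 i, fun i => hφ i⟩, ⟨fun j => h2 j, fun j => hψ j⟩⟩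
  have hDclosed : IsClosed D := by
    have : D = (⋂ i, ⋂ j, {p : (Fin n → ℝ) × (Fin m → ℝ) | p.1 i + p.2 j ≤ c i j}) ∩
        (((⋂ i, {p : (Fin n → ℝ) × (Fin m → ℝ) | p.1 i ≤ 0}) ∩
          (⋂ j, {p : (Fin n → ℝ) × (Fin m → ℝ) | p.2 j ≤ 0})) ∩
         ((⋂ i, {p : (Fin n → ℝ) × (Fin m → ℝ) | -M ≤ p.1 i}) ∩
          (⋂ j, {p : (Fin n → ℝ) × (Fin m → ℝ) | -M ≤ p.2 j}))) := by
      ext p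
      simp [hD, DualFeasible, Set.mem_iInter, forall_and]
      tauto
    rw [this]
    have e1 : ∀ i : Fin n, Continuous fun p : (Fin n → ℝ) × (Fin m → ℝ) => p.1 i :=
      fun i => (continuous_apply i).comp continuous_fst
    have e2 : ∀ j : Fin m, Continuous fun p : (Fin n → ℝ) × (Fin m → ℝ) => p.2 j :=
      fun j => (continuous_apply j).comp continuous_snd
    refine IsClosed.inter (isClosed_iInter fun i => isClosed_iInter fun j =>
        isClosed_le ((e1 i).add (e2 j)) continuous_const) (IsClosed.inter (IsClosed.inter ?_ ?_)
        (IsClosed.inter ?_ ?_))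
    · exact isClosed_iInter fun i => isClosed_le (e1 i) continuous_const
    · exact isClosed_iInter fun j => isClosed_le (e2 j) continuous_const
    · exact isClosed_iInter fun i => isClosed_le continuous_const (e1 i)
    · exact isClosed_iInter fun j => isClosed_le continuous_const (e2 j)
  have hDcomp : IsCompact D :=
    IsCompact.of_isClosed_subset (isCompact_Icc.prod isCompact_Icc) hDclosed hDsub
  have hcont : Continuous fun p : (Fin n → ℝ) × (Fin m → ℝ) => dval μ ν p.1 p.2 := by
    unfold dval
    exact ((continuous_finset_sum _ fun i _ =>
        (((continuous_apply i).comp continuous_fst).mul continuous_const)).add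
      (continuous_finset_sum _ fun j _ =>
        (((continuous_apply j).comp continuous_snd).mul continuous_const)))
  obtain ⟨⟨φ0, ψ0⟩, hmem, hmax⟩ := hDcomp.exists_isMaxOn hDne hcont.continuousOn
  refine ⟨φ0, ψ0, hmem.1, fun φ ψ hfe => ?_⟩
  obtain ⟨φ', ψ', hfe', h1, h2, hle⟩ := clamp φ ψ hfe
  exact hle.trans (hmax (⟨hfe', h1, h2⟩ : (φ', ψ') ∈ D))


lemma weak_duality {n m : ℕ} (c : Fin n → Fin m → ℝ) (μ : Fin n → ℝ) (ν : Fin m → ℝ)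
    (γ : Fin n → Fin m → ℝ) (φ : Fin n → ℝ) (ψ : Fin m → ℝ)
    (hγ : Feasible μ ν γ) (hc : ∀ i j, φ i + ψ j ≤ c i j) (hφ : ∀ i, φ i ≤ 0)
    (hψ : ∀ j, ψ j ≤ 0) :
    ∑ i, φ i * μ i + ∑ j, ψ j * ν j ≤ cost c γ := by
  obtain ⟨h0, h1, h2⟩ := hγ
  have step1 : ∑ i, φ i * μ i ≤ ∑ i, φ i * ∑ j, γ i j :=
    Finset.sum_le_sum fun i _ => mul_le_mul_of_nonpos_left (h1 i) (hφ i)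
  have step2 : ∑ j, ψ j * ν j ≤ ∑ j, ψ j * ∑ i, γ i j :=
    Finset.sum_le_sum fun j _ => mul_le_mul_of_nonpos_left (h2 j) (hψ j)
  have key : ∑ i, φ i * ∑ j, γ i j + ∑ j, ψ j * ∑ i, γ i j
      = ∑ i, ∑ j, (φ i + ψ j) * γ i j := by
    simp only [Finset.mul_sum, add_mul, Finset.sum_add_distrib]
    rw [Finset.sum_comm (f := fun j i => ψ j * γ i j)]
  have last : ∑ i, ∑ j, (φ i + ψ j) * γ i j ≤ cost c γ :=
    Finset.sum_le_sum fun i _ => Finset.sum_le_sum fun j _ =>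
      mul_le_mul_of_nonneg_right (hc i j) (h0 i j)
  linarith

noncomputable def posCone (ι : Type*) [Fintype ι] : ProperCone ℝ (EuclideanSpace ℝ ι) where
  toSubmodule :=
  { carrier := {x | ∀ i, 0 ≤ x i}
    add_mem' := fun hx hy i => by simpa using add_nonneg (hx i) (hy i)
    zero_mem' := fun i => le_refl 0
    smul_mem' := fun c x hx i => by exact mul_nonneg c.2 (hx i) }
  isClosed' := by
    have h : {x : EuclideanSpace ℝ ι | ∀ i, 0 ≤ x i} = ⋂ i, {x | 0 ≤ x i} := by
      ext x; simp [Set.mem_iInter]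
    show IsClosed {x : EuclideanSpace ℝ ι | ∀ i, 0 ≤ x i}
    rw [h]
    exact isClosed_iInter fun i =>
      isClosed_le continuous_const (EuclideanSpace.proj i).continuous

@[simp] lemma mem_posCone {ι : Type*} [Fintype ι] (x : EuclideanSpace ℝ ι) :
    x ∈ posCone ι ↔ ∀ i, 0 ≤ x i := Iff.rfl

variable {n m : ℕ}

abbrev Kappa (n m : ℕ) := Sum (Fin n) (Sum (Fin m) (Fin 1))
abbrev Iota (n m : ℕ) := Sum (Fin n × Fin m) (Kappa n m)

noncomputable def constraintMap (c : Fin n → Fin m → ℝ) :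
    EuclideanSpace ℝ (Iota n m) →L[ℝ] EuclideanSpace ℝ (Kappa n m) :=
  LinearMap.toContinuousLinearMap
  { toFun := fun x => WithLp.toLp 2 fun k =>
      Sum.elim (fun i => ∑ j, x (Sum.inl (i, j)))
        (Sum.elim (fun j => ∑ i, x (Sum.inl (i, j)))
          (fun _ => ∑ i, ∑ j, c i j * x (Sum.inl (i, j)))) k + x (Sum.inr k)
    map_add' := fun x y => by
      ext k
      rcases k with i | j | u <;>
        simp [Finset.sum_add_distrib, mul_add] <;> ring
    map_smul' := fun r x => by
      ext k
      rcases k with i | j | u <;>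
        simp [Finset.mul_sum, mul_add] <;>
        exact Finset.sum_congr rfl fun i _ => Finset.sum_congr rfl fun j _ => by ring }

lemma constraintMap_apply (c : Fin n → Fin m → ℝ) (x : EuclideanSpace ℝ (Iota n m))
    (k : Kappa n m) :
    constraintMap c x k =
      Sum.elim (fun i => ∑ j, x (Sum.inl (i, j)))
        (Sum.elim (fun j => ∑ i, x (Sum.inl (i, j)))
          (fun _ => ∑ i, ∑ j, c i j * x (Sum.inl (i, j)))) k + x (Sum.inr k) := rfl

lemma euclid_inner_eq {ι : Type*} [Fintype ι] (x y : EuclideanSpace ℝ ι) :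
    ⟪x, y⟫_ℝ = ∑ k, x k * y k := by
  simp [PiLp.inner_apply, RCLike.inner_apply, mul_comm]


lemma inner_single_slack (c : Fin n → Fin m → ℝ) (y : EuclideanSpace ℝ (Kappa n m))
    (k0 : Kappa n m) :
    ⟪constraintMap c (EuclideanSpace.single (Sum.inr k0) 1), y⟫_ℝ = y k0 := by
  have h : constraintMap c (EuclideanSpace.single (Sum.inr k0) 1)
      = EuclideanSpace.single k0 1 := by
    ext k
    rw [constraintMap_apply]
    rcases k with i | j | u <;>
      simp [EuclideanSpace.single_apply]
  rw [h, euclid_inner_eq]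
  simp [EuclideanSpace.single_apply, ite_mul]

lemma inner_single_main (c : Fin n → Fin m → ℝ) (y : EuclideanSpace ℝ (Kappa n m))
    (i0 : Fin n) (j0 : Fin m) :
    ⟪constraintMap c (EuclideanSpace.single (Sum.inl (i0, j0)) 1), y⟫_ℝ
      = y (Sum.inl i0) + y (Sum.inr (Sum.inl j0)) + c i0 j0 * y (Sum.inr (Sum.inr 0)) := by
  rw [euclid_inner_eq]
  rw [Fintype.sum_sum_type]
  rw [Fintype.sum_sum_type]
  simp only [constraintMap_apply, Sum.elim_inl, Sum.elim_inr, EuclideanSpace.single_apply]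
  simp [Finset.sum_ite_eq', Prod.ext_iff, ite_and, mul_ite]
  ring


lemma no_gap (c : Fin n → Fin m → ℝ) (μ : Fin n → ℝ) (ν : Fin m → ℝ)
    (hμ : ∀ i, 0 ≤ μ i) (hν : ∀ j, 0 ≤ ν j)
    (γ0 : Fin n → Fin m → ℝ) (hfeas : Feasible μ ν γ0)
    (hmin : ∀ γ, Feasible μ ν γ → cost c γ0 ≤ cost c γ)
    (φ0 : Fin n → ℝ) (ψ0 : Fin m → ℝ) (hdf : DualFeasible c φ0 ψ0)
    (hdmax : ∀ φ ψ, DualFeasible c φ ψ → dval μ ν φ ψ ≤ dval μ ν φ0 ψ0) :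
    cost c γ0 ≤ dval μ ν φ0 ψ0 := by
  set d : ℝ := dval μ ν φ0 ψ0 with hd
  set b : EuclideanSpace ℝ (Kappa n m) :=
    (show EuclideanSpace ℝ (Kappa n m) from WithLp.toLp 2 (Sum.elim μ (Sum.elim ν fun _ => d))) with hbdef
  by_cases hb : b ∈ (posCone (Iota n m)).map (constraintMap c)
  · -- b in closure of image: extract an approximating sequence and pass to the limit
    rw [ProperCone.mem_map, PointedCone.mem_closure, PointedCone.coe_map] at hb
    obtain ⟨u, hmem, htends⟩ := mem_closure_iff_seq_limit.mp hb
    choose x hxK hxf using hmem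
    have hxK' : ∀ k idx, 0 ≤ x k idx := fun k idx => hxK k idx
    have hcoord : ∀ k0 : Kappa n m, Tendsto (fun k => u k k0) atTop (nhds (b k0)) :=
      fun k0 => ((EuclideanSpace.proj k0).continuous.tendsto b).comp htends
    -- eventually rows bounded
    have hev : ∀ᶠ k in atTop, ∀ i : Fin n, u k (Sum.inl i) ≤ μ i + 1 := by
      refine eventually_all.mpr fun i => ?_
      exact (hcoord (Sum.inl i)).eventually (eventually_le_nhds (lt_add_one (μ i)))
    obtain ⟨N, hN⟩ := eventually_atTop.mp hev
    set γs : ℕ → (Fin n → Fin m → ℝ) := fun k i j => x (k + N) (Sum.inl (i, j)) with hγs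
    have hrow : ∀ k (i : Fin n), ∑ j, γs k i j ≤ u (k + N) (Sum.inl i) := by
      intro k i
      rw [← hxf (k + N)]
      show ∑ j, γs k i j ≤ ∑ j, x (k + N) (Sum.inl (i, j)) + x (k + N) (Sum.inr (Sum.inl i))
      simp only [hγs]
      linarith [hxK' (k + N) (Sum.inr (Sum.inl i))]
    have hcol : ∀ k (j : Fin m), ∑ i, γs k i j ≤ u (k + N) (Sum.inr (Sum.inl j)) := by
      intro k j
      rw [← hxf (k + N)]
      show ∑ i, γs k i j ≤ ∑ i, x (k + N) (Sum.inl (i, j)) + x (k + N) (Sum.inr (Sum.inr (Sum.inl j)))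
      simp only [hγs]
      linarith [hxK' (k + N) (Sum.inr (Sum.inr (Sum.inl j)))]
    have hcost : ∀ k, cost c (γs k) ≤ u (k + N) (Sum.inr (Sum.inr 0)) := by
      intro k
      rw [← hxf (k + N)]
      show cost c (γs k) ≤ (∑ i, ∑ j, c i j * x (k + N) (Sum.inl (i, j)))
          + x (k + N) (Sum.inr (Sum.inr (Sum.inr 0)))
      simp only [hγs, cost]
      linarith [hxK' (k + N) (Sum.inr (Sum.inr (Sum.inr 0)))]
    have hbound : ∀ k, γs k ∈ Set.Icc (fun (_ : Fin n) (_ : Fin m) => (0:ℝ))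
        (fun i _ => μ i + 1) := by
      intro k
      constructor
      · intro i; intro j; exact hxK' (k + N) (Sum.inl (i, j))
      · intro i; intro j
        calc γs k i j ≤ ∑ j', γs k i j' :=
              Finset.single_le_sum (f := fun j' => γs k i j')
                (fun j' _ => hxK' (k + N) (Sum.inl (i, j'))) (mem_univ j)
          _ ≤ u (k + N) (Sum.inl i) := hrow k i
          _ ≤ μ i + 1 := hN (k + N) (Nat.le_add_left N k) i
    obtain ⟨γstar, hγmem, σ, hσ, hconv⟩ := isCompact_Icc.tendsto_subseq hbound
    have hshift : Tendsto (fun k => σ k + N) atTop atTop :=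
      tendsto_atTop_mono (fun k => (hσ.le_apply).trans (Nat.le_add_right _ N)) tendsto_id
    have hcoordσ : ∀ k0 : Kappa n m,
        Tendsto (fun k => u (σ k + N) k0) atTop (nhds (b k0)) :=
      fun k0 => (hcoord k0).comp hshift
    have hentry : ∀ (i : Fin n) (j : Fin m),
        Tendsto (fun k => γs (σ k) i j) atTop (nhds (γstar i j)) := by
      intro i j
      exact (((continuous_apply j).comp (continuous_apply i)).tendsto γstar).comp hconv
    have hfeasstar : Feasible μ ν γstar := by
      refine ⟨fun i j => hγmem.1 i j, fun i => ?_, fun j => ?_⟩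
      · refine le_of_tendsto_of_tendsto'
          (tendsto_finset_sum _ fun j _ => hentry i j) (hcoordσ (Sum.inl i))
          (fun k => hrow (σ k) i)
      · refine le_of_tendsto_of_tendsto'
          (tendsto_finset_sum _ fun i _ => hentry i j) (hcoordσ (Sum.inr (Sum.inl j)))
          (fun k => hcol (σ k) j)
    have hcoststar : cost c γstar ≤ d := by
      have h1 : Tendsto (fun k => cost c (γs (σ k))) atTop (nhds (cost c γstar)) := by
        unfold cost
        exact tendsto_finset_sum _ fun i _ => tendsto_finset_sum _ fun j _ =>
          (tendsto_const_nhds.mul (hentry i j))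
      exact le_of_tendsto_of_tendsto' h1 (hcoordσ (Sum.inr (Sum.inr 0)))
        (fun k => hcost (σ k))
    exact (hmin γstar hfeasstar).trans hcoststar
  · -- b not in the cone: separation gives a contradiction
    exfalso
    obtain ⟨y, hy1, hy2⟩ := (posCone (Iota n m)).hyperplane_separation_of_notMem hb
    have hy : ∀ x : EuclideanSpace ℝ (Iota n m), (∀ idx, 0 ≤ x idx) →
        0 ≤ ⟪constraintMap c x, y⟫_ℝ := by
      intro x hx
      have := (ProperCone.mem_innerDual).mp hy1 (x := x) hx
      rwa [ContinuousLinearMap.adjoint_inner_right] at this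
    set p : Fin n → ℝ := fun i => y (Sum.inl i) with hp
    set q : Fin m → ℝ := fun j => y (Sum.inr (Sum.inl j)) with hq
    set t : ℝ := y (Sum.inr (Sum.inr 0)) with ht
    have hynn : ∀ k0, 0 ≤ y k0 := by
      intro k0
      have := hy (EuclideanSpace.single (Sum.inr k0) 1) (fun idx => by
        rw [EuclideanSpace.single_apply]; split <;> norm_num)
      rwa [inner_single_slack] at this
    have hkey : ∀ i j, 0 ≤ p i + q j + c i j * t := by
      intro i j
      have := hy (EuclideanSpace.single (Sum.inl (i, j)) 1) (fun idx => by
        rw [EuclideanSpace.single_apply]; split <;> norm_num)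
      rwa [inner_single_main] at this
    have hneg : ∑ i, p i * μ i + (∑ j, q j * ν j + t * d) < 0 := by
      have h := hy2
      rw [euclid_inner_eq, Fintype.sum_sum_type, Fintype.sum_sum_type] at h
      simpa [hbdef, hp, hq, ht, mul_comm] using h
    rcases eq_or_lt_of_le (hynn (Sum.inr (Sum.inr 0))) with ht0 | ht0
    · -- t = 0
      have hs1 : (0:ℝ) ≤ ∑ i, p i * μ i :=
        Finset.sum_nonneg fun i _ => mul_nonneg (hynn (Sum.inl i)) (hμ i)
      have hs2 : (0:ℝ) ≤ ∑ j, q j * ν j :=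
        Finset.sum_nonneg fun j _ => mul_nonneg (hynn (Sum.inr (Sum.inl j))) (hν j)
      have ht0' : t = 0 := ht0.symm
      rw [ht0'] at hneg
      linarith
    · -- t > 0
      have hdfeas : DualFeasible c (fun i => -(p i) / t) (fun j => -(q j) / t) := by
        refine ⟨fun i j => ?_, fun i => ?_, fun j => ?_⟩
        · have h1 : -(p i) - q j ≤ c i j * t := by linarith [hkey i j]
          have h2 : (-(p i) - q j) / t ≤ c i j := (div_le_iff₀ ht0).mpr h1
          have h3 : -(p i) / t + -(q j) / t = (-(p i) - q j) / t := by ring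
          linarith [h2, h3.le, h3.ge]
        · have := div_nonneg (hynn (Sum.inl i)) ht0.le
          simp only [neg_div]
          linarith
        · have := div_nonneg (hynn (Sum.inr (Sum.inl j))) ht0.le
          simp only [neg_div]
          linarith
      have hle := hdmax _ _ hdfeas
      have htne : t ≠ 0 := ne_of_gt ht0
      have hval : dval μ ν (fun i => -(p i) / t) (fun j => -(q j) / t) * t
          = -((∑ i, p i * μ i) + (∑ j, q j * ν j)) := by
        unfold dval
        simp only []
        rw [add_mul, Finset.sum_mul, Finset.sum_mul]
        have h1 : ∀ i : Fin n, -(p i) / t * μ i * t = -(p i * μ i) := fun i => by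
          field_simp
        have h2 : ∀ j : Fin m, -(q j) / t * ν j * t = -(q j * ν j) := fun j => by
          field_simp
        rw [Finset.sum_congr rfl fun i _ => h1 i, Finset.sum_congr rfl fun j _ => h2 j]
        rw [Finset.sum_neg_distrib, Finset.sum_neg_distrib]
        ring
      have hmul : dval μ ν (fun i => -(p i) / t) (fun j => -(q j) / t) * t ≤ d * t :=
        mul_le_mul_of_nonneg_right hle ht0.le
      rw [hval] at hmul
      have hcomm : t * d = d * t := mul_comm t d
      linarith

theorem stmt_6 {n m : ℕ} (c : Fin n → Fin m → ℝ) (μ : Fin n → ℝ) (ν : Fin m → ℝ)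
    (hμ : ∀ i, 0 ≤ μ i) (hν : ∀ j, 0 ≤ ν j) :
    ∃ v : ℝ,
      IsLeast {v | ∃ γ, Feasible μ ν γ ∧ cost c γ = v} v ∧
      IsGreatest {v | ∃ (φ : Fin n → ℝ) (ψ : Fin m → ℝ),
        (∀ i j, φ i + ψ j ≤ c i j) ∧ (∀ i, φ i ≤ 0) ∧ (∀ j, ψ j ≤ 0) ∧
        ∑ i, φ i * μ i + ∑ j, ψ j * ν j = v} v := by
  obtain ⟨γ0, hfeas, hmin⟩ := primal_exists c μ ν hμ hν
  obtain ⟨φ0, ψ0, hdf, hdmax⟩ := dual_exists c μ ν hμ hν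
  have hwd : dval μ ν φ0 ψ0 ≤ cost c γ0 :=
    weak_duality c μ ν γ0 φ0 ψ0 hfeas hdf.1 hdf.2.1 hdf.2.2
  have hng := no_gap c μ ν hμ hν γ0 hfeas hmin φ0 ψ0 hdf hdmax
  have heq : dval μ ν φ0 ψ0 = cost c γ0 := le_antisymm hwd hng
  refine ⟨cost c γ0, ⟨⟨γ0, hfeas, rfl⟩, ?_⟩, ⟨⟨φ0, ψ0, hdf.1, hdf.2.1, hdf.2.2, heq⟩, ?_⟩⟩
  · rintro v ⟨γ, hγ, rfl⟩
    exact hmin γ hγ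
  · rintro v ⟨φ, ψ, h1, h2, h3, rfl⟩
    exact weak_duality c μ ν γ0 φ ψ hfeas h1 h2 h3
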